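/- Let L/K be a finite Galois field extension, G a group acting on L via a surjection onto Gal(L/K) with kernel H. For V, W semilinear representations of G over L, the natural K-linear map L ⊗_K Hom_{L⋊G}(V, W) → Hom_{L[H]}(V|_H, W|_H), λ ⊗ f ↦ λ·f, is an isomorphism. In particular dim_K Hom_{L⋊G}(V,W) = dim_L Hom_{L[H]}(V|_H, W|_H). -/

import Mathlib

open scoped TensorProduct

variable {K L : Type*} [Field K] [Field L] [Algebra K L]
variable {G : Type*} [Group G]
variable {V W : Type*} [AddCommGroup V] [Module K V] [Module L V] [IsScalarTower K L V]
  [AddCommGroup W] [Module K W] [Module L W] [IsScalarTower K L W]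

/-- `Hom_{L⋊G}(V, W)`: the `K`-vector space of `L`-linear `G`-equivariant maps between
two semilinear representations, as a `K`-submodule of `V →ₗ[K] W`. -/
def homSL (σ : G →* (L ≃ₐ[K] L))
    (ρV : G →* (V ≃ₗ[K] V)) (ρW : G →* (W ≃ₗ[K] W)) :
    Submodule K (V →ₗ[K] W) where
  carrier := {f | (∀ (c : L) (v : V), f (c • v) = c • f v) ∧
    ∀ (g : G) (v : V), f (ρV g v) = ρW g (f v)}
  add_mem' := by
    intro f g hf hg
    exact ⟨fun c v => by simp [hf.1, hg.1], fun g' v => by simp [hf.2, hg.2]⟩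
  zero_mem' := ⟨fun c v => by simp, fun g v => by simp⟩
  smul_mem' := by
    intro c f hf
    refine ⟨fun a v => ?_, fun g v => by simp [hf.2]⟩
    rw [LinearMap.smul_apply, LinearMap.smul_apply, hf.1, smul_comm]

/-- `Hom_{L[H]}(V|_H, W|_H)`: the `L`-vector space of `L`-linear `H`-equivariant maps
(`H = ker σ`), as an `L`-submodule of `V →ₗ[K] W`. -/
def homH (σ : G →* (L ≃ₐ[K] L))
    (ρV : G →* (V ≃ₗ[K] V)) (ρW : G →* (W ≃ₗ[K] W))
    (hρW : ∀ g (c : L) (w : W), ρW g (c • w) = σ g c • ρW g w) :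
    Submodule L (V →ₗ[K] W) where
  carrier := {f | (∀ (c : L) (v : V), f (c • v) = c • f v) ∧
    ∀ h ∈ σ.ker, ∀ v : V, f (ρV h v) = ρW h (f v)}
  add_mem' := by
    intro f g hf hg
    exact ⟨fun c v => by simp [hf.1, hg.1], fun h hh v => by simp [hf.2 h hh, hg.2 h hh]⟩
  zero_mem' := ⟨fun c v => by simp, fun h hh v => by simp⟩
  smul_mem' := by
    intro a f hf
    refine ⟨fun c v => ?_, fun h hh v => ?_⟩
    · rw [LinearMap.smul_apply, LinearMap.smul_apply, hf.1, smul_comm]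
    · have h1 : σ h = 1 := by rwa [MonoidHom.mem_ker] at hh
      rw [LinearMap.smul_apply, LinearMap.smul_apply, hf.2 h hh, hρW h a (f v), h1]
      simp

/-- The natural map `L ⊗_K Hom_{L⋊G}(V, W) → V →ₗ[K] W`, `λ ⊗ f ↦ λ • f`. -/
noncomputable def natMap (σ : G →* (L ≃ₐ[K] L))
    (ρV : G →* (V ≃ₗ[K] V)) (ρW : G →* (W ≃ₗ[K] W)) :
    L ⊗[K] (homSL σ ρV ρW) →ₗ[K] (V →ₗ[K] W) :=
  TensorProduct.lift
    (LinearMap.mk₂ K (fun (a : L) (f : homSL σ ρV ρW) => a • (f : V →ₗ[K] W))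
      (fun a b f => add_smul a b _)
      (fun c a f => smul_assoc c a _)
      (fun a f g => by simp only [Submodule.coe_add, smul_add])
      (fun a c f => by
        simp only [SetLike.val_smul]
        exact (smul_comm a c (f : V →ₗ[K] W)).symm))

section Aux

set_option linter.unusedVariables false
set_option linter.unusedSectionVars false

variable (σ : G →* (L ≃ₐ[K] L)) (ρV : G →* (V ≃ₗ[K] V)) (ρW : G →* (W ≃ₗ[K] W))

lemma rho2 {M : Type*} [AddCommGroup M] [Module K M] (ρ : G →* (M ≃ₗ[K] M))
    (g g' : G) (v : M) : ρ g (ρ g' v) = ρ (g * g') v := by rw [map_mul]; rfl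

lemma sigma2 (g g' : G) (c : L) : σ g (σ g' c) = σ (g * g') c := by rw [map_mul]; rfl

/-- The semilinear `G`-action on `V →ₗ[K] W`: `g • f = ρW g ∘ f ∘ ρV g⁻¹`. -/
noncomputable def gact (g : G) (f : V →ₗ[K] W) : V →ₗ[K] W :=
  (ρW g).toLinearMap ∘ₗ f ∘ₗ (ρV g⁻¹).toLinearMap

variable {ρV ρW}

lemma gact_apply (g : G) (f : V →ₗ[K] W) (v : V) :
    gact ρV ρW g f v = ρW g (f (ρV g⁻¹ v)) := rfl

lemma gact_one (f : V →ₗ[K] W) : gact ρV ρW 1 f = f := by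
  ext v; simp [gact_apply]

lemma gact_mul (g g' : G) (f : V →ₗ[K] W) :
    gact ρV ρW (g * g') f = gact ρV ρW g (gact ρV ρW g' f) := by
  ext v
  rw [gact_apply, gact_apply, gact_apply, rho2 ρW g g', rho2 ρV g'⁻¹ g⁻¹, ← mul_inv_rev]

lemma gact_sum {ι : Type*} (g : G) (t : Finset ι) (F : ι → (V →ₗ[K] W)) :
    gact ρV ρW g (∑ i ∈ t, F i) = ∑ i ∈ t, gact ρV ρW g (F i) := by
  ext v
  simp [gact_apply, LinearMap.sum_apply, map_sum]

lemma gact_zero (g : G) : gact ρV ρW g (0 : V →ₗ[K] W) = 0 := by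
  ext v; simp [gact_apply]

variable {σ}

lemma gact_smul (hρW : ∀ g (c : L) (w : W), ρW g (c • w) = σ g c • ρW g w)
    (g : G) (c : L) (f : V →ₗ[K] W) :
    gact ρV ρW g (c • f) = σ g c • gact ρV ρW g f := by
  ext v
  simp [gact_apply, hρW]

lemma mem_homH_iff (hρW : ∀ g (c : L) (w : W), ρW g (c • w) = σ g c • ρW g w)
    {f : V →ₗ[K] W} :
    f ∈ homH σ ρV ρW hρW ↔ (∀ (c : L) (v : V), f (c • v) = c • f v) ∧
      ∀ h ∈ σ.ker, ∀ v : V, f (ρV h v) = ρW h (f v) := Iff.rfl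

lemma mem_homSL_iff' {f : V →ₗ[K] W} :
    f ∈ homSL σ ρV ρW ↔ (∀ (c : L) (v : V), f (c • v) = c • f v) ∧
      ∀ (g : G) (v : V), f (ρV g v) = ρW g (f v) := Iff.rfl

lemma gact_ker (hρW : ∀ g (c : L) (w : W), ρW g (c • w) = σ g c • ρW g w)
    {g : G} (hg : g ∈ σ.ker) {f : V →ₗ[K] W} (hf : f ∈ homH σ ρV ρW hρW) :
    gact ρV ρW g f = f := by
  ext v
  rw [gact_apply, hf.2 g⁻¹ (inv_mem hg) v, rho2 ρW]
  simp

lemma gact_mem_homH (hρV : ∀ g (c : L) (v : V), ρV g (c • v) = σ g c • ρV g v)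
    (hρW : ∀ g (c : L) (w : W), ρW g (c • w) = σ g c • ρW g w)
    (g : G) {f : V →ₗ[K] W} (hf : f ∈ homH σ ρV ρW hρW) :
    gact ρV ρW g f ∈ homH σ ρV ρW hρW := by
  constructor
  · intro c v
    rw [gact_apply, gact_apply, hρV, hf.1, hρW, sigma2 σ]
    simp
  · intro h hh v
    have hconj : g⁻¹ * h * g ∈ σ.ker := by
      simpa using (MonoidHom.normal_ker σ).conj_mem h hh g⁻¹
    rw [gact_apply, gact_apply]
    have h1 : ρV g⁻¹ (ρV h v) = ρV (g⁻¹ * h * g) (ρV g⁻¹ v) := by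
      rw [rho2 ρV, rho2 ρV]
      congr 1
      group
    rw [h1, hf.2 _ hconj, rho2 ρW, rho2 ρW]
    have h2 : g * (g⁻¹ * h * g) = h * g := by group
    rw [h2]

lemma mem_homSL_iff_fixed (hρW : ∀ g (c : L) (w : W), ρW g (c • w) = σ g c • ρW g w)
    {f : V →ₗ[K] W} :
    f ∈ homSL σ ρV ρW ↔ f ∈ homH σ ρV ρW hρW ∧ ∀ g : G, gact ρV ρW g f = f := by
  constructor
  · intro hf
    refine ⟨⟨hf.1, fun h _ v => hf.2 h v⟩, fun g => ?_⟩
    ext v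
    rw [gact_apply, hf.2 g⁻¹ v, rho2 ρW]
    simp
  · rintro ⟨hf, hfix⟩
    refine ⟨hf.1, fun g v => ?_⟩
    have h2 : gact ρV ρW g f (ρV g v) = f (ρV g v) := by rw [hfix g]
    rw [gact_apply, rho2 ρV, inv_mul_cancel, map_one] at h2
    exact h2.symm

end Aux
set_option maxHeartbeats 1000000 in
/-- Let `L/K` be a finite Galois field extension, `G` a group acting on
`L` via a surjection onto `Gal(L/K)` with kernel `H`.  For finite-dimensional semilinear
representations `V, W` of `G` over `L`, the natural `K`-linear map
`L ⊗_K Hom_{L⋊G}(V, W) → Hom_{L[H]}(V|_H, W|_H)`, `λ ⊗ f ↦ λ·f`, is an isomorphism: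
it is injective with image exactly `Hom_{L[H]}(V|_H, W|_H)`.  In particular
`dim_K Hom_{L⋊G}(V, W) = dim_L Hom_{L[H]}(V|_H, W|_H)`. -/
theorem stmt9 [FiniteDimensional K L] [IsGalois K L]
    (σ : G →* (L ≃ₐ[K] L)) (hσ : Function.Surjective σ)
    [FiniteDimensional L V] [FiniteDimensional L W]
    (ρV : G →* (V ≃ₗ[K] V)) (hρV : ∀ g (c : L) (v : V), ρV g (c • v) = σ g c • ρV g v)
    (ρW : G →* (W ≃ₗ[K] W)) (hρW : ∀ g (c : L) (w : W), ρW g (c • w) = σ g c • ρW g w) :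
    Function.Injective (natMap σ ρV ρW) ∧
    Set.range (natMap σ ρV ρW) = (homH σ ρV ρW hρW : Set (V →ₗ[K] W)) ∧
    Module.finrank K (homSL σ ρV ρW) = Module.finrank L (homH σ ρV ρW hρW) := by
  classical
  haveI : FiniteDimensional K V := Module.Finite.trans L V
  haveI : FiniteDimensional K W := Module.Finite.trans L W
  -- a section of σ
  choose s hs using hσ
  -- basis of L indexed by the Galois group
  have hcard : Fintype.card (L ≃ₐ[K] L) = Module.finrank K L := by rw [← Nat.card_eq_fintype_card]; exact IsGalois.card_aut_eq_finrank K L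
  let e : Fin (Module.finrank K L) ≃ (L ≃ₐ[K] L) := (Fintype.equivFinOfCardEq hcard).symm
  let b : Module.Basis (L ≃ₐ[K] L) K L := (Module.finBasis K L).reindex e
  -- the matrix of embeddings
  set B : Matrix (L ≃ₐ[K] L) (L ≃ₐ[K] L) L := Matrix.of (fun τ υ => τ (b υ)) with hBdef
  have hdetB : IsUnit B.det := by
    have h1 : B.transpose * B = (Algebra.traceMatrix K b).map (algebraMap K L) := by
      ext υ υ'
      rw [Matrix.mul_apply, Matrix.map_apply, Algebra.traceMatrix_apply,
        Algebra.traceForm_apply, trace_eq_sum_automorphisms]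
      simp [hBdef, Matrix.transpose_apply, map_mul]
    have h2 : B.det * B.det = algebraMap K L ((Algebra.traceMatrix K b).det) := by
      calc B.det * B.det = (B.transpose * B).det := by rw [Matrix.det_mul, Matrix.det_transpose]
      _ = _ := by rw [h1]; exact ((RingHom.map_det _ _).symm)
    have h3 : (Algebra.traceMatrix K b).det ≠ 0 := by
      have := Algebra.discr_not_zero_of_basis K b
      rwa [Algebra.discr_def] at this
    rw [isUnit_iff_ne_zero]
    intro h0
    rw [h0, mul_zero] at h2
    exact h3 (by
      have := h2.symm
      rwa [← map_zero (algebraMap K L), (algebraMap K L).injective.eq_iff] at this)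
  have hBinv : B * B⁻¹ = 1 := Matrix.mul_nonsing_inv B hdetB
  -- abbreviations
  set F := homSL σ ρV ρW with hF
  set M := homH σ ρV ρW hρW with hM
  let nF := Module.finrank K F
  let mb : Module.Basis (Fin nF) K F := Module.finBasis K F
  let m : Fin nF → (V →ₗ[K] W) := fun j => (mb j : V →ₗ[K] W)
  have hmSL : ∀ j, m j ∈ F := fun j => (mb j).2
  have hmH : ∀ j, m j ∈ M := fun j => ((mem_homSL_iff_fixed hρW).mp (hmSL j)).1
  have hmfix : ∀ j g, gact ρV ρW g (m j) = m j :=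
    fun j g => ((mem_homSL_iff_fixed hρW).mp (hmSL j)).2 g
  -- natMap on pure tensors
  have hnat_tmul : ∀ (a : L) (f : F), natMap σ ρV ρW (a ⊗ₜ[K] f) = a • (f : V →ₗ[K] W) := by
    intro a f
    simp [natMap]
  have hnat_smul : ∀ (c : L) (x : L ⊗[K] F), natMap σ ρV ρW (c • x) = c • natMap σ ρV ρW x := by
    intro c x
    induction x using TensorProduct.induction_on with
    | zero => simp
    | tmul a f => rw [TensorProduct.smul_tmul', hnat_tmul, hnat_tmul, smul_eq_mul, mul_smul]
    | add x y hx hy => rw [smul_add, map_add, map_add, hx, hy, smul_add]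
  -- K-linear independence of m
  have hKind : LinearIndependent K m := by
    have := mb.linearIndependent.map' F.subtype (Submodule.ker_subtype F)
    exact this
  -- L-linear independence of m
  have hindepL : LinearIndependent L m := by
    rw [Fintype.linearIndependent_iff]
    intro c hc j
    have hτ : ∀ τ : L ≃ₐ[K] L, ∑ i, τ (c i) • m i = 0 := by
      intro τ
      have h0 := congrArg (gact ρV ρW (s τ)) hc
      rw [gact_sum, gact_zero] at h0
      calc ∑ i, τ (c i) • m i = ∑ i, gact ρV ρW (s τ) (c i • m i) := by
            refine Finset.sum_congr rfl fun i _ => ?_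
            rw [gact_smul hρW, hmfix i, hs]
      _ = 0 := h0
    have hK : ∀ μ : L, ∑ i, (Algebra.trace K L (μ * c i)) • m i = 0 := by
      intro μ
      have h0 : ∑ τ : L ≃ₐ[K] L, τ μ • ∑ i, τ (c i) • m i = 0 := by
        simp [hτ]
      calc ∑ i, (Algebra.trace K L (μ * c i)) • m i
          = ∑ i, (algebraMap K L (Algebra.trace K L (μ * c i))) • m i := by
            refine Finset.sum_congr rfl fun i _ => ?_
            rw [algebraMap_smul]
      _ = ∑ i, (∑ τ : L ≃ₐ[K] L, τ (μ * c i)) • m i := by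
            simp_rw [trace_eq_sum_automorphisms]
      _ = ∑ i, ∑ τ : L ≃ₐ[K] L, (τ μ * τ (c i)) • m i := by
            simp_rw [Finset.sum_smul, map_mul]
      _ = ∑ τ : L ≃ₐ[K] L, τ μ • ∑ i, τ (c i) • m i := by
            rw [Finset.sum_comm]
            simp_rw [Finset.smul_sum, smul_smul]
      _ = 0 := h0
    have htr : ∀ μ : L, Algebra.trace K L (μ * c j) = 0 := by
      intro μ
      exact Fintype.linearIndependent_iff.mp hKind _ (hK μ) j
    have hnd := traceForm_nondegenerate K L
    refine hnd.1 (c j) fun μ => ?_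
    have := htr μ
    rwa [Algebra.traceForm_apply, mul_comm]
  -- every element of homH lies in the L-span of homSL
  have hFspan : ∀ f, f ∈ M → f ∈ Submodule.span L (F : Set (V →ₗ[K] W)) := by
    intro f hf
    let u : (L ≃ₐ[K] L) → (V →ₗ[K] W) := fun υ => ∑ τ : L ≃ₐ[K] L, B τ υ • gact ρV ρW (s τ) f
    have hu' : ∀ υ, u υ = ∑ τ : L ≃ₐ[K] L, gact ρV ρW (s τ) (b υ • f) := by
      intro υ
      refine Finset.sum_congr rfl fun τ _ => ?_
      rw [gact_smul hρW, hs]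
      rfl
    have huSL : ∀ υ, u υ ∈ F := by
      intro υ
      rw [hF, mem_homSL_iff_fixed hρW]
      constructor
      · exact Submodule.sum_mem _ fun τ _ =>
          Submodule.smul_mem _ _ (gact_mem_homH hρV hρW (s τ) hf)
      · intro g
        have hx : b υ • f ∈ M := Submodule.smul_mem _ _ hf
        have hstep : ∀ τ : L ≃ₐ[K] L,
            gact ρV ρW g (gact ρV ρW (s τ) (b υ • f)) =
              gact ρV ρW (s (σ g * τ)) (b υ • f) := by
          intro τ
          rw [← gact_mul]
          have hker : (s (σ g * τ))⁻¹ * (g * s τ) ∈ σ.ker := by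
            rw [MonoidHom.mem_ker, map_mul, map_mul, map_inv, hs, hs, inv_mul_cancel]
          have hdecomp : g * s τ = s (σ g * τ) * ((s (σ g * τ))⁻¹ * (g * s τ)) := by group
          rw [hdecomp, gact_mul, gact_ker hρW hker hx]
        rw [hu', gact_sum]
        rw [Finset.sum_congr rfl fun τ _ => hstep τ]
        have hre : ∑ τ : L ≃ₐ[K] L, gact ρV ρW (s (σ g * τ)) (b υ • f) =
            ∑ τ : L ≃ₐ[K] L, gact ρV ρW (s τ) (b υ • f) :=
          Fintype.sum_equiv (Equiv.mulLeft (σ g)) _ _ (fun τ => rfl)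
        rw [hre, ← hu']
    have hwu : gact ρV ρW (s 1) f = ∑ υ, (B⁻¹ υ 1) • u υ := by
      have hcalc : ∑ υ, (B⁻¹ υ 1) • u υ =
          ∑ τ : L ≃ₐ[K] L, ((B * B⁻¹) τ 1) • gact ρV ρW (s τ) f := by
        simp_rw [u, Finset.smul_sum, smul_smul, Matrix.mul_apply, Finset.sum_smul]
        rw [Finset.sum_comm]
        refine Finset.sum_congr rfl fun τ _ => Finset.sum_congr rfl fun υ _ => ?_
        rw [mul_comm]
      rw [hcalc, hBinv]
      simp [Matrix.one_apply]
    have hs1 : gact ρV ρW (s 1) f = f :=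
      gact_ker hρW (by rw [MonoidHom.mem_ker, hs]) hf
    rw [← hs1, hwu]
    exact Submodule.sum_mem _ fun υ _ =>
      Submodule.smul_mem _ _ (Submodule.subset_span (huSL υ))
  -- span of m over L is homH
  have hMspan : Submodule.span L (Set.range m) = M := by
    apply le_antisymm
    · rw [Submodule.span_le]
      rintro x ⟨j, rfl⟩
      exact hmH j
    · intro f hf
      have h1 := hFspan f hf
      have h2 : (F : Set (V →ₗ[K] W)) ⊆ (Submodule.span L (Set.range m) : Set (V →ₗ[K] W)) := by
        intro x hx
        have hxF : (⟨x, hx⟩ : F) = ∑ j, mb.repr ⟨x, hx⟩ j • mb j := (mb.sum_repr _).symm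
        have hxc : x = ∑ j, mb.repr ⟨x, hx⟩ j • m j := by
          have := congrArg (F.subtype) hxF
          simpa [m, -Module.Basis.sum_repr] using this
        rw [hxc]
        refine Submodule.sum_mem _ fun j _ => ?_
        rw [← algebraMap_smul L (mb.repr ⟨x, hx⟩ j) (m j)]
        exact Submodule.smul_mem _ _ (Submodule.subset_span ⟨j, rfl⟩)
      have := Submodule.span_le.mpr h2
      exact this h1
  -- representation of tensors
  have hrep : ∀ x : L ⊗[K] F, ∃ c : Fin nF → L, x = ∑ j, c j ⊗ₜ[K] mb j := by
    intro x
    induction x using TensorProduct.induction_on with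
    | zero => exact ⟨0, by simp⟩
    | tmul a y =>
      refine ⟨fun j => mb.repr y j • a, ?_⟩
      calc a ⊗ₜ[K] y = a ⊗ₜ[K] (∑ j, mb.repr y j • mb j) := by rw [Module.Basis.sum_repr]
      _ = ∑ j, a ⊗ₜ[K] (mb.repr y j • mb j) := by rw [TensorProduct.tmul_sum]
      _ = ∑ j, (mb.repr y j • a) ⊗ₜ[K] mb j := by
          refine Finset.sum_congr rfl fun j _ => ?_
          rw [TensorProduct.smul_tmul]
    | add x y hx hy =>
      obtain ⟨c, rfl⟩ := hx
      obtain ⟨d, rfl⟩ := hy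
      exact ⟨c + d, by simp [TensorProduct.add_tmul, Finset.sum_add_distrib]⟩
  -- injectivity
  have hker : ∀ x : L ⊗[K] F, natMap σ ρV ρW x = 0 → x = 0 := by
    intro x hx
    obtain ⟨c, rfl⟩ := hrep x
    rw [map_sum] at hx
    have hx' : ∑ j, c j • m j = 0 := by
      rw [← hx]
      exact (Finset.sum_congr rfl fun j _ => (hnat_tmul (c j) (mb j)).symm)
    have hc0 := Fintype.linearIndependent_iff.mp hindepL c hx'
    simp [hc0]
  have hinj : Function.Injective (natMap σ ρV ρW) := by
    intro x y hxy
    have h0 := hker (x - y) (by rw [map_sub, hxy, sub_self])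
    exact sub_eq_zero.mp h0
  refine ⟨hinj, ?_, ?_⟩
  · -- range
    apply Set.eq_of_subset_of_subset
    · rintro _ ⟨x, rfl⟩
      induction x using TensorProduct.induction_on with
      | zero => simpa using M.zero_mem
      | tmul a f =>
        rw [hnat_tmul]
        exact Submodule.smul_mem _ _ (((mem_homSL_iff_fixed hρW).mp f.2).1)
      | add x y hx hy =>
        rw [map_add]
        exact Submodule.add_mem _ hx hy
    · intro f hf
      have h1 : f ∈ Submodule.span L (Set.range m) := by rw [hMspan]; exact hf
      clear hf
      induction h1 using Submodule.span_induction with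
      | mem x hx =>
        obtain ⟨j, rfl⟩ := hx
        exact ⟨(1 : L) ⊗ₜ[K] mb j, by rw [hnat_tmul, one_smul]⟩
      | zero => exact ⟨0, map_zero _⟩
      | add x y hx' hy' hx hy =>
        obtain ⟨x', rfl⟩ := hx
        obtain ⟨y', rfl⟩ := hy
        exact ⟨x' + y', map_add _ _ _⟩
      | smul c x hx' hx =>
        obtain ⟨x', rfl⟩ := hx
        exact ⟨c • x', hnat_smul c x'⟩
  · -- dimensions
    have hindepM : LinearIndependent L (fun j => (⟨m j, hmH j⟩ : M)) := by
      apply LinearIndependent.of_comp M.subtype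
      exact hindepL
    have hspanM : ⊤ ≤ Submodule.span L (Set.range (fun j => (⟨m j, hmH j⟩ : M))) := by
      have hmap : Submodule.map M.subtype
          (Submodule.span L (Set.range (fun j => (⟨m j, hmH j⟩ : M)))) =
          Submodule.map M.subtype ⊤ := by
        have himg : (⇑M.subtype '' Set.range (fun j => (⟨m j, hmH j⟩ : M))) = Set.range m := by
          rw [← Set.range_comp]; rfl
        rw [Submodule.map_span, Submodule.map_top, Submodule.range_subtype, himg, hMspan]
      exact (Submodule.map_injective_of_injective M.injective_subtype hmap).ge
    let mbL : Module.Basis (Fin nF) L M := Module.Basis.mk hindepM hspanM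
    rw [show Module.finrank K F = nF from rfl]
    rw [Module.finrank_eq_card_basis mbL, Fintype.card_fin]
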